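/- (Two-signal equilibrium equation.) For α ≥ 0 let Z_α be a real Gaussian random variable with mean α² and variance 2α² (for α = 0, Z_α = α² a.s.), set p_1 = e^{Z_α}/(e^{Z_α} + 1), p_2 = 1/(e^{Z_α} + 1), and define Φ(α) = 1 − E[p_1] − α²·E[p_1 p_2]. Then Φ(0) = 1/2, and there exists α* > 0 with Φ(α*) = 0. -/

import Mathlib

open MeasureTheory ProbabilityTheory

noncomputable section

/-- The law of `Z_α`: Gaussian on `ℝ` with mean `α²` and variance `2α²`
(for `α = 0` this is the point mass at `0 = α²`). -/
def lawZ2 (α : ℝ) : Measure ℝ :=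
  gaussianReal (α ^ 2) (Real.toNNReal (2 * α ^ 2))

/-- The two-signal equilibrium equation function
`Φ(α) = 1 − E[p₁] − α²·E[p₁p₂]`, where `p₁ = e^{Z_α}/(e^{Z_α}+1)` and
`p₂ = 1/(e^{Z_α}+1)`. -/
def Phi2 (α : ℝ) : ℝ :=
  1 - (∫ z, Real.exp z / (Real.exp z + 1) ∂(lawZ2 α)) -
    α ^ 2 * ∫ z, (Real.exp z / (Real.exp z + 1)) * (1 / (Real.exp z + 1)) ∂(lawZ2 α)

namespace TwoSignalAux

open Real Set
open scoped NNReal ENNReal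

def f1 (z : ℝ) : ℝ := Real.exp z / (Real.exp z + 1)
def f2 (z : ℝ) : ℝ := 1 / (Real.exp z + 1)

lemma den_pos (z : ℝ) : 0 < Real.exp z + 1 := by positivity
lemma f1_nonneg (z : ℝ) : 0 ≤ f1 z := by unfold f1; positivity
lemma f2_nonneg (z : ℝ) : 0 ≤ f2 z := by unfold f2; positivity
lemma f1_le_one (z : ℝ) : f1 z ≤ 1 := by
  rw [f1, div_le_one (den_pos z)]; linarith
lemma f2_le_one (z : ℝ) : f2 z ≤ 1 := by
  rw [f2, div_le_one (den_pos z)]; have := Real.exp_pos z; linarith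
lemma f1_add_f2 (z : ℝ) : f1 z + f2 z = 1 := by
  rw [f1, f2, ← add_div, div_eq_one_iff_eq (den_pos z).ne']
lemma f2_pos (z : ℝ) : 0 < f2 z := div_pos one_pos (den_pos z)
lemma half_le_f1 {z : ℝ} (hz : 0 ≤ z) : 1/2 ≤ f1 z := by
  rw [f1, le_div_iff₀ (den_pos z)]
  have := Real.one_le_exp hz; linarith
lemma f1_cont : Continuous f1 :=
  Real.continuous_exp.div (Real.continuous_exp.add continuous_const) fun z => (den_pos z).ne'
lemma f2_cont : Continuous f2 :=
  continuous_const.div (Real.continuous_exp.add continuous_const) fun z => (den_pos z).ne'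
lemma f1_meas : Measurable f1 := f1_cont.measurable
lemma f2_meas : Measurable f2 := f2_cont.measurable

lemma g_cont : Continuous fun z => f1 z * f2 z := f1_cont.mul f2_cont
lemma g_nonneg (z : ℝ) : 0 ≤ f1 z * f2 z := mul_nonneg (f1_nonneg z) (f2_nonneg z)
lemma g_le_one (z : ℝ) : f1 z * f2 z ≤ 1 :=
  mul_le_one₀ (f1_le_one z) (f2_nonneg z) (f2_le_one z)

lemma Phi2_eq (α : ℝ) :
    Phi2 α = 1 - (∫ z, f1 z ∂(lawZ2 α)) - α ^ 2 * ∫ z, f1 z * f2 z ∂(lawZ2 α) := rfl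

instance (α : ℝ) : IsProbabilityMeasure (lawZ2 α) := by
  unfold lawZ2; infer_instance

/-! ### Integral against a nondegenerate Gaussian as a Lebesgue integral -/

lemma integral_gaussianReal_pdf (m : ℝ) {v : ℝ≥0} (hv : v ≠ 0) (g : ℝ → ℝ) :
    ∫ z, g z ∂(gaussianReal m v) = ∫ z, gaussianPDFReal m v z * g z := by
  rw [gaussianReal_of_var_ne_zero m hv,
    show gaussianPDF m v = fun x => ((Real.toNNReal (gaussianPDFReal m v x) : ℝ≥0) : ℝ≥0∞) from rfl,
    integral_withDensity_eq_integral_smul (measurable_gaussianPDFReal m v).real_toNNReal g]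
  refine integral_congr_ae (Filter.Eventually.of_forall fun x => ?_)
  simp [NNReal.smul_def, Real.coe_toNNReal _ (gaussianPDFReal_nonneg m v x)]

/-! ### Continuity of `α ↦ ∫ g ∂(lawZ2 α)` -/

lemma lawZ2_eq_map (α : ℝ) :
    lawZ2 α = Measure.map (fun x => Real.sqrt 2 * α * x + α ^ 2) (gaussianReal 0 1) := by
  have hv : (⟨(Real.sqrt 2 * α) ^ 2, sq_nonneg _⟩ * 1 : ℝ≥0) = Real.toNNReal (2 * α ^ 2) := by
    refine NNReal.coe_injective ?_
    rw [Real.coe_toNNReal _ (by positivity)]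
    push_cast
    change (Real.sqrt 2 * α) ^ 2 * 1 = 2 * α ^ 2
    rw [mul_pow, sq_sqrt (by norm_num : (2:ℝ) ≥ 0)]
    ring
  have h1 : (gaussianReal 0 1).map ((Real.sqrt 2 * α) * ·)
      = gaussianReal 0 (⟨(Real.sqrt 2 * α) ^ 2, sq_nonneg _⟩ * 1) := by
    exact (gaussianReal_map_const_mul (μ := 0) (v := 1) (Real.sqrt 2 * α)).trans (by rw [mul_zero]; rfl)
  have h2 := gaussianReal_map_add_const
    (μ := 0) (v := (⟨(Real.sqrt 2 * α) ^ 2, sq_nonneg _⟩ * 1 : ℝ≥0)) (α ^ 2)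
  calc lawZ2 α = gaussianReal (0 + α ^ 2) (⟨(Real.sqrt 2 * α) ^ 2, sq_nonneg _⟩ * 1) := by
        rw [hv, zero_add]; rfl
    _ = ((gaussianReal 0 1).map ((Real.sqrt 2 * α) * ·)).map (· + α ^ 2) := by
        rw [h1, h2]
    _ = (gaussianReal 0 1).map (fun x => Real.sqrt 2 * α * x + α ^ 2) := by
        rw [Measure.map_map (measurable_add_const _) (measurable_const_mul _)]
        rfl

lemma integral_lawZ2 (α : ℝ) {g : ℝ → ℝ} (hg : Continuous g) :
    ∫ z, g z ∂(lawZ2 α) = ∫ x, g (Real.sqrt 2 * α * x + α ^ 2) ∂(gaussianReal 0 1) := by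
  rw [lawZ2_eq_map α]
  exact integral_map (by fun_prop) hg.aestronglyMeasurable

lemma cont_integral_lawZ2 {g : ℝ → ℝ} (hg : Continuous g) (hg0 : ∀ z, 0 ≤ g z)
    (hg1 : ∀ z, g z ≤ 1) : Continuous fun α => ∫ z, g z ∂(lawZ2 α) := by
  have heq : (fun α => ∫ z, g z ∂(lawZ2 α))
      = fun α => ∫ x, g (Real.sqrt 2 * α * x + α ^ 2) ∂(gaussianReal 0 1) :=
    funext fun α => integral_lawZ2 α hg
  rw [heq]
  refine continuous_of_dominated (fun α => ?_) (fun α => ?_) (integrable_const 1) ?_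
  · exact (hg.comp (by continuity)).aestronglyMeasurable
  · exact Filter.Eventually.of_forall fun x => by
      rw [Real.norm_eq_abs, abs_of_nonneg (hg0 _)]; exact hg1 _
  · exact Filter.Eventually.of_forall fun x => hg.comp (by continuity)

lemma Phi2_continuous : Continuous Phi2 := by
  have hI1 : Continuous fun α => ∫ z, f1 z ∂(lawZ2 α) :=
    cont_integral_lawZ2 f1_cont f1_nonneg f1_le_one
  have hI2 : Continuous fun α => ∫ z, f1 z * f2 z ∂(lawZ2 α) :=
    cont_integral_lawZ2 g_cont g_nonneg g_le_one
  have : Phi2 = fun α =>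
      1 - (∫ z, f1 z ∂(lawZ2 α)) - α ^ 2 * ∫ z, f1 z * f2 z ∂(lawZ2 α) :=
    funext Phi2_eq
  rw [this]
  exact (continuous_const.sub hI1).sub ((continuous_pow 2).mul hI2)

/-! ### The value at `0` -/

lemma Phi2_zero : Phi2 0 = 1 / 2 := by
  have h0 : lawZ2 0 = Measure.dirac 0 := by
    rw [lawZ2]
    norm_num
  rw [Phi2_eq, h0, integral_dirac, integral_dirac]
  rw [f1, f2]
  norm_num [Real.exp_zero]

/-! ### Negativity at `α = 3` -/

def v3 : ℝ≥0 := Real.toNNReal (2 * (3:ℝ) ^ 2)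

lemma v3_coe : ((v3 : ℝ≥0) : ℝ) = 18 := by
  rw [v3, Real.coe_toNNReal _ (by norm_num)]; norm_num

lemma v3_ne : v3 ≠ 0 := by
  intro h
  have := v3_coe
  rw [h] at this
  norm_num at this

def φ3 (z : ℝ) : ℝ := gaussianPDFReal ((3:ℝ) ^ 2) v3 z

lemma φ3_pos (z : ℝ) : 0 < φ3 z := gaussianPDFReal_pos _ _ _ v3_ne
lemma φ3_meas : Measurable φ3 := measurable_gaussianPDFReal _ _
lemma φ3_int : Integrable φ3 := integrable_gaussianPDFReal _ _

/-- the key symmetry: `φ3 * f2` is an even function. -/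
lemma key_even (z : ℝ) : φ3 (-z) * f2 (-z) = φ3 z * f2 z := by
  have h1 := (Real.exp_pos z).ne'
  have h2 := (den_pos z).ne'
  have e1 : rexp (-(-z - (3:ℝ) ^ 2) ^ 2 / (2 * (v3 : ℝ)))
      = rexp (-z) * rexp (-(z - (3:ℝ) ^ 2) ^ 2 / (2 * (v3 : ℝ))) := by
    rw [← Real.exp_add]
    congr 1
    rw [v3_coe]
    ring
  have hphi : φ3 (-z) = rexp (-z) * φ3 z := by
    rw [φ3, φ3, gaussianPDFReal, gaussianPDFReal, e1]
    ring
  have hf : f2 (-z) = f1 z := by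
    rw [f2, f1, Real.exp_neg]
    rw [div_eq_div_iff (by positivity) (den_pos z).ne']
    field_simp
    ring
  have hef : rexp (-z) * f1 z = f2 z := by
    rw [f1, f2, Real.exp_neg]
    field_simp
  rw [hphi, hf, mul_assoc, mul_comm (φ3 z), ← mul_assoc, hef, mul_comm]

lemma mul_bdd_int {g : ℝ → ℝ} (hg : Measurable g) (hg0 : ∀ z, 0 ≤ g z) (hg1 : ∀ z, g z ≤ 1) :
    Integrable (fun z => φ3 z * g z) := by
  refine φ3_int.mono' ((φ3_meas.mul hg).aestronglyMeasurable) ?_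
  refine Filter.Eventually.of_forall fun z => ?_
  rw [Real.norm_eq_abs, abs_of_nonneg (mul_nonneg (φ3_pos z).le (hg0 z))]
  calc φ3 z * g z ≤ φ3 z * 1 := mul_le_mul_of_nonneg_left (hg1 z) (φ3_pos z).le
    _ = φ3 z := mul_one _

lemma even_split :
    ∫ z, φ3 z * f2 z = 2 * ∫ z in Ioi (0:ℝ), φ3 z * f2 z := by
  have hint : Integrable (fun z => φ3 z * f2 z) :=
    mul_bdd_int f2_meas f2_nonneg f2_le_one
  have hsplit : (∫ z in Iic (0:ℝ), φ3 z * f2 z) + ∫ z in Ioi (0:ℝ), φ3 z * f2 z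
      = ∫ z, φ3 z * f2 z := by
    simpa using integral_add_compl measurableSet_Iic hint
  have hneg : (∫ z in Iic (0:ℝ), φ3 z * f2 z) = ∫ z in Ioi (0:ℝ), φ3 z * f2 z := by
    have := integral_comp_neg_Iic (0:ℝ) (fun z => φ3 z * f2 z)
    rw [neg_zero] at this
    rw [← this]
    exact integral_congr_ae (Filter.Eventually.of_forall fun z => (key_even z).symm)
  linarith

lemma A_pos : 0 < ∫ z in Ioi (0:ℝ), φ3 z * f2 z := by
  rw [setIntegral_pos_iff_support_of_nonneg_ae]
  · have hsupp : Function.support (fun z => φ3 z * f2 z) = univ := by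
      ext z
      simp only [Function.mem_support, mem_univ, iff_true]
      exact (mul_pos (φ3_pos z) (f2_pos z)).ne'
    rw [hsupp, univ_inter, Real.volume_Ioi]
    norm_num
  · exact Filter.Eventually.of_forall fun z => mul_nonneg (φ3_pos z).le (f2_nonneg z)
  · exact (mul_bdd_int f2_meas f2_nonneg f2_le_one).integrableOn

lemma E2_ge : (∫ z in Ioi (0:ℝ), φ3 z * f2 z) / 2 ≤ ∫ z, φ3 z * (f1 z * f2 z) := by
  have hg_meas : Measurable (fun z => f1 z * f2 z) := f1_meas.mul f2_meas
  have hint : Integrable (fun z => φ3 z * (f1 z * f2 z)) :=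
    mul_bdd_int hg_meas g_nonneg g_le_one
  have step1 : (∫ z in Ioi (0:ℝ), φ3 z * (f1 z * f2 z)) ≤ ∫ z, φ3 z * (f1 z * f2 z) :=
    setIntegral_le_integral hint
      (Filter.Eventually.of_forall fun z => mul_nonneg (φ3_pos z).le (g_nonneg z))
  have step2 : (∫ z in Ioi (0:ℝ), (1/2) * (φ3 z * f2 z))
      ≤ ∫ z in Ioi (0:ℝ), φ3 z * (f1 z * f2 z) := by
    refine setIntegral_mono_on
      (((mul_bdd_int f2_meas f2_nonneg f2_le_one).const_mul _).integrableOn)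
      hint.integrableOn measurableSet_Ioi fun z hz => ?_
    have h12 : (1/2 : ℝ) ≤ f1 z := half_le_f1 (le_of_lt hz)
    have hrw : (1/2) * (φ3 z * f2 z) = φ3 z * ((1/2) * f2 z) := by ring
    rw [hrw]
    exact mul_le_mul_of_nonneg_left
      (mul_le_mul_of_nonneg_right h12 (f2_nonneg z)) (φ3_pos z).le
  rw [integral_const_mul] at step2
  linarith

lemma Phi2_three_neg : Phi2 3 < 0 := by
  have hlaw : lawZ2 3 = gaussianReal ((3:ℝ) ^ 2) v3 := rfl
  have hI1 : ∫ z, f1 z ∂(lawZ2 3) = ∫ z, φ3 z * f1 z := by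
    rw [hlaw]; exact integral_gaussianReal_pdf _ v3_ne f1
  have hI2 : ∫ z, f1 z * f2 z ∂(lawZ2 3) = ∫ z, φ3 z * (f1 z * f2 z) := by
    rw [hlaw]; exact integral_gaussianReal_pdf _ v3_ne _
  have hsum : (∫ z, φ3 z * f1 z) + (∫ z, φ3 z * f2 z) = 1 := by
    rw [← integral_add (mul_bdd_int f1_meas f1_nonneg f1_le_one)
      (mul_bdd_int f2_meas f2_nonneg f2_le_one)]
    have : (fun z => φ3 z * f1 z + φ3 z * f2 z) = φ3 := by
      funext z
      rw [← mul_add, f1_add_f2, mul_one]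
    rw [this]
    exact integral_gaussianPDFReal_eq_one _ v3_ne
  have hA := A_pos
  have hE2 := E2_ge
  have hT := even_split
  rw [Phi2_eq, hI1, hI2]
  have h9 : (3:ℝ) ^ 2 = 9 := by norm_num
  rw [h9]
  linarith

end TwoSignalAux

/-- `Φ(0) = 1/2`, and there exists `α* > 0` with `Φ(α*) = 0`. -/
theorem two_signal_equilibrium_equation :
    Phi2 0 = 1 / 2 ∧ ∃ αStar : ℝ, 0 < αStar ∧ Phi2 αStar = 0 := by
  refine ⟨TwoSignalAux.Phi2_zero, ?_⟩
  have h0 : Phi2 0 = 1 / 2 := TwoSignalAux.Phi2_zero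
  have h3 : Phi2 3 < 0 := TwoSignalAux.Phi2_three_neg
  have hmem : (0:ℝ) ∈ Set.Icc (Phi2 3) (Phi2 0) := by
    rw [h0]
    exact ⟨h3.le, by norm_num⟩
  obtain ⟨x, hx, hfx⟩ := intermediate_value_Icc' (by norm_num : (0:ℝ) ≤ 3)
    TwoSignalAux.Phi2_continuous.continuousOn hmem
  refine ⟨x, ?_, hfx⟩
  rcases eq_or_lt_of_le hx.1 with h | h
  · exfalso
    rw [← h, h0] at hfx
    norm_num at hfx
  · exact h

end
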